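/- Let e ≥ 2 be an integer, (p_n)_{n≥1} a sequence in (0,1], and define f_n(x) = (1/p_{n+1}) x^e - (1-p_{n+1})/p_{n+1} for x ∈ ℂ. Let u_0 ∈ ℂ and u_{n} = f_n(u_{n-1}) for n ≥ 1. Then the sequence (u_n)_{n≥0} is bounded if and only if |u_n| ≤ 1 for all n ≥ 0. -/

import Mathlib

lemma step_lemma (e : ℕ) (he : 2 ≤ e) (p : ℝ) (hp0 : 0 < p) (hp1 : p ≤ 1)
    (x : ℂ) (hx : 1 < ‖x‖) :
    ‖x‖ ^ 2 ≤ ‖(x ^ e - (1 - (p : ℂ))) / (p : ℂ)‖ := by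
  have hxe : ‖x‖ ^ 2 ≤ ‖x‖ ^ e :=
    pow_le_pow_right₀ (le_of_lt hx) he
  have habs : ‖x‖ ^ e - (1 - p) ≤ ‖x ^ e - (1 - (p : ℂ))‖ := by
    have := norm_sub_norm_le (x ^ e) (1 - (p : ℂ))
    have h1 : ‖(1 - (p : ℂ))‖ = 1 - p := by
      rw [show (1 : ℂ) - (p : ℂ) = ((1 - p : ℝ) : ℂ) by push_cast; ring,
        Complex.norm_real, Real.norm_eq_abs, abs_of_nonneg (by linarith)]
    calc ‖x‖ ^ e - (1 - p)
        = ‖x ^ e‖ - ‖(1 - (p : ℂ))‖ := by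
          rw [norm_pow, h1]
      _ ≤ _ := this
  rw [norm_div, Complex.norm_real, Real.norm_eq_abs, abs_of_pos hp0, le_div_iff₀ hp0]
  have hxe1 : 1 ≤ ‖x‖ ^ e := one_le_pow₀ (le_of_lt hx)
  nlinarith [norm_nonneg (x ^ e - (1 - (p : ℂ)))]

theorem stmt5 (e : ℕ) (he : 2 ≤ e) (p : ℕ → ℝ) (hp : ∀ n, 1 ≤ n → 0 < p n ∧ p n ≤ 1)
    (u : ℕ → ℂ)
    (hu : ∀ n, 1 ≤ n → u n = (u (n - 1) ^ e - (1 - (p (n + 1) : ℂ))) / (p (n + 1) : ℂ)) :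
    (∃ C : ℝ, ∀ n, ‖u n‖ ≤ C) ↔ ∀ n, ‖u n‖ ≤ 1 := by
  constructor
  · rintro ⟨C, hC⟩
    by_contra h
    push_neg at h
    obtain ⟨k, hk⟩ := h
    set R := ‖u k‖ with hR
    have hR1 : 1 < R := hk
    -- induction: R ^ (2 ^ i) ≤ |u (k + i)|
    have key : ∀ i, R ^ (2 ^ i) ≤ ‖u (k + i)‖ := by
      intro i
      induction i with
      | zero => simp [hR]
      | succ i ih =>
        have hgt : 1 < ‖u (k + i)‖ :=
          lt_of_lt_of_le (one_lt_pow₀ hR1 (by positivity)) ih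
        have h1 : 1 ≤ k + i + 1 := by omega
        have hp' := hp (k + i + 1 + 1) (by omega)
        have := hu (k + i + 1) h1
        simp only [Nat.add_sub_cancel] at this
        have hstep := step_lemma e he (p (k + i + 1 + 1)) hp'.1 hp'.2 (u (k + i)) hgt
        rw [← this] at hstep
        calc R ^ 2 ^ (i + 1) = (R ^ 2 ^ i) ^ 2 := by rw [← pow_mul]; ring_nf
          _ ≤ ‖u (k + i)‖ ^ 2 := by
              apply pow_le_pow_left₀ (by positivity) ih
          _ ≤ _ := hstep
    -- contradiction with boundedness
    obtain ⟨i, hi⟩ := pow_unbounded_of_one_lt C hR1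
    have h2i : R ^ i ≤ R ^ (2 ^ i) :=
      pow_le_pow_right₀ (le_of_lt hR1) (Nat.lt_two_pow_self (n := i)).le
    have := hC (k + i)
    have := key i
    linarith
  · intro h
    exact ⟨1, h⟩
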